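/- (Theorem 1, abstract form.) Let V be a real normed vector space, K a natural number, and u, u_0, ..., u_K \in V with u_{-1} := 0. Let \eta_{-1}, \eta_0, ..., \eta_K be positive reals, s > 0, \mu > 0, C_A > 0, C_I > 0 and \varepsilon > 0. For each k = 0, ..., K and each positive integer M, let v_{k,M} \in V satisfy \|(u_k - u_{k-1}) - v_{k,M}\| \le C_I M^{-\mu} \eta_{k-1}. Assume \|u - u_K\| \le \varepsilon/2. Define F_k := (\eta_k^{-s} + \eta_{k-1}^{-s}) \eta_{k-1}^{-1}, G_K := \sum_{k=0}^{K} F_k^{\mu/(\mu+1)} \eta_{k-1}, and set M_{K-k} := \lceil (2 C_I G_K)^{1/\mu} F_k^{-1/(\mu+1)} \varepsilon^{-1/\mu} \rceil. Then the multilevel approximation u^{ML} := \sum_{k=0}^{K} v_{k, M_{K-k}} satisfies \|u - u^{ML}\| \le \varepsilon, and its cost satisfies \sum_{k=0}^{K} M_{K-k} \, C_A (\eta_k^{-s} + \eta_{k-1}^{-s}) \le C_A (2 C_I)^{1/\mu} G_K^{(\mu+1)/\mu} \varepsilon^{-1/\mu} + C_A \sum_{k=0}^{K} F_k \eta_{k-1}.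 -/

import Mathlib

open Finset

private lemma telescope_aux {V : Type*} [AddCommGroup V] (uu : ℕ → V) :
    ∀ n : ℕ, ∑ k ∈ range (n + 1), (uu k - if k = 0 then 0 else uu (k - 1)) = uu n := by
  intro n
  induction n with
  | zero => simp
  | succ n ih =>
    rw [Finset.sum_range_succ, ih]
    simp

/-- Theorem 1 (abstract form): accuracy and ε-cost of the adaptive multilevel
stochastic collocation approximation with rounded-up optimal sample numbers. -/
theorem multilevel_accuracy_and_cost
    (V : Type*) [NormedAddCommGroup V] [NormedSpace ℝ V]
    (K : ℕ) (u : V) (uu : ℕ → V) (η : ℤ → ℝ)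
    (s μ CA CI ε : ℝ)
    (hη : ∀ k : ℤ, -1 ≤ k → k ≤ K → 0 < η k)
    (hs : 0 < s) (hμ : 0 < μ) (hCA : 0 < CA) (hCI : 0 < CI) (hε : 0 < ε)
    (v : ℕ → ℕ → V)
    (hv : ∀ k ≤ K, ∀ M : ℕ, 0 < M →
      ‖(uu k - if k = 0 then 0 else uu (k - 1)) - v k M‖ ≤
        CI * (M : ℝ) ^ (-μ) * η ((k : ℤ) - 1))
    (hspace : ‖u - uu K‖ ≤ ε / 2)
    (F : ℕ → ℝ)
    (hF : ∀ k : ℕ,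
      F k = (η (k : ℤ) ^ (-s) + η ((k : ℤ) - 1) ^ (-s)) * (η ((k : ℤ) - 1))⁻¹)
    (G : ℝ)
    (hG : G = ∑ k ∈ range (K + 1), F k ^ (μ / (μ + 1)) * η ((k : ℤ) - 1))
    (M : ℕ → ℕ)
    (hM : ∀ k : ℕ,
      M k = ⌈(2 * CI * G) ^ (1 / μ) * F k ^ (-(1 / (μ + 1))) * ε ^ (-(1 / μ))⌉₊) :
    ‖u - ∑ k ∈ range (K + 1), v k (M k)‖ ≤ ε ∧
      ∑ k ∈ range (K + 1),
          (M k : ℝ) * (CA * (η (k : ℤ) ^ (-s) + η ((k : ℤ) - 1) ^ (-s))) ≤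
        CA * (2 * CI) ^ (1 / μ) * G ^ ((μ + 1) / μ) * ε ^ (-(1 / μ)) +
          CA * ∑ k ∈ range (K + 1), F k * η ((k : ℤ) - 1) := by
  have hμ1 : 0 < μ + 1 := by linarith
  -- positivity of η at levels k and k-1
  have hηk : ∀ k : ℕ, k ≤ K → 0 < η k := fun k hk =>
    hη k (by omega) (by exact_mod_cast hk)
  have hηk1 : ∀ k : ℕ, k ≤ K → 0 < η ((k : ℤ) - 1) := fun k hk =>
    hη _ (by omega) (by omega)
  -- positivity of F
  have hFpos : ∀ k : ℕ, k ≤ K → 0 < F k := by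
    intro k hk
    rw [hF k]
    have h1 := hηk k hk
    have h2 := hηk1 k hk
    positivity
  -- positivity of G
  have hGpos : 0 < G := by
    rw [hG]
    apply Finset.sum_pos
    · intro k hk
      have hk' : k ≤ K := by simpa using Finset.mem_range_succ_iff.mp hk
      have := hFpos k hk'
      have := hηk1 k hk'
      positivity
    · exact ⟨0, Finset.mem_range.mpr (Nat.succ_pos K)⟩
  set x : ℕ → ℝ := fun k =>
    (2 * CI * G) ^ (1 / μ) * F k ^ (-(1 / (μ + 1))) * ε ^ (-(1 / μ)) with hx
  have hxpos : ∀ k : ℕ, k ≤ K → 0 < x k := by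
    intro k hk
    have := hFpos k hk
    have h2CI : (0:ℝ) < 2 * CI * G := by positivity
    positivity
  have hxleM : ∀ k : ℕ, x k ≤ M k := fun k => (hM k) ▸ Nat.le_ceil _
  have hMpos : ∀ k : ℕ, k ≤ K → 0 < M k := by
    intro k hk
    rw [hM k]
    exact Nat.ceil_pos.mpr (hxpos k hk)
  have hMle : ∀ k : ℕ, k ≤ K → (M k : ℝ) ≤ x k + 1 := by
    intro k hk
    rw [hM k]
    exact (Nat.ceil_lt_add_one (hxpos k hk).le).le
  -- key computation : x k ^ (-μ) = (2 CI G)⁻¹ * F k ^ (μ/(μ+1)) * ε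
  have hxpow : ∀ k : ℕ, k ≤ K →
      x k ^ (-μ) = (2 * CI * G)⁻¹ * F k ^ (μ / (μ + 1)) * ε := by
    intro k hk
    have hF' := hFpos k hk
    have h2CI : (0:ℝ) < 2 * CI * G := by positivity
    rw [hx]
    rw [Real.mul_rpow (by positivity) (by positivity),
        Real.mul_rpow (by positivity) (by positivity),
        ← Real.rpow_mul h2CI.le, ← Real.rpow_mul hF'.le,
        ← Real.rpow_mul hε.le]
    have e1 : 1 / μ * (-μ) = -1 := by field_simp
    have e2 : -(1 / (μ + 1)) * (-μ) = μ / (μ + 1) := by field_simp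
    have e3 : -(1 / μ) * (-μ) = 1 := by field_simp
    rw [e1, e2, e3, Real.rpow_neg_one, Real.rpow_one]
  -- per-term error bound
  have hterm : ∀ k : ℕ, k ≤ K →
      CI * (M k : ℝ) ^ (-μ) * η ((k : ℤ) - 1) ≤
        ε / (2 * G) * (F k ^ (μ / (μ + 1)) * η ((k : ℤ) - 1)) := by
    intro k hk
    have hM' := hMpos k hk
    have hMbound : (M k : ℝ) ^ (-μ) ≤ x k ^ (-μ) :=
      Real.rpow_le_rpow_of_nonpos (hxpos k hk) (hxleM k) (by linarith)
    have : CI * (M k : ℝ) ^ (-μ) * η ((k : ℤ) - 1) ≤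
        CI * x k ^ (-μ) * η ((k : ℤ) - 1) := by
      have := hηk1 k hk
      gcongr
    refine this.trans (le_of_eq ?_)
    rw [hxpow k hk]
    field_simp
  constructor
  · -- accuracy
    have htel : ∑ k ∈ range (K + 1), (uu k - if k = 0 then 0 else uu (k - 1)) = uu K :=
      telescope_aux uu K
    have hsplit : u - ∑ k ∈ range (K + 1), v k (M k) =
        (u - uu K) + ∑ k ∈ range (K + 1),
          ((uu k - if k = 0 then 0 else uu (k - 1)) - v k (M k)) := by
      rw [Finset.sum_sub_distrib, htel]
      abel
    rw [hsplit]
    calc ‖(u - uu K) + ∑ k ∈ range (K + 1),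
          ((uu k - if k = 0 then 0 else uu (k - 1)) - v k (M k))‖
        ≤ ‖u - uu K‖ + ‖∑ k ∈ range (K + 1),
          ((uu k - if k = 0 then 0 else uu (k - 1)) - v k (M k))‖ := norm_add_le _ _
      _ ≤ ε / 2 + ∑ k ∈ range (K + 1),
          ‖(uu k - if k = 0 then 0 else uu (k - 1)) - v k (M k)‖ := by
          gcongr
          exact norm_sum_le _ _
      _ ≤ ε / 2 + ∑ k ∈ range (K + 1),
          ε / (2 * G) * (F k ^ (μ / (μ + 1)) * η ((k : ℤ) - 1)) := by
          gcongr with k hk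
          have hk' : k ≤ K := Finset.mem_range_succ_iff.mp hk
          exact ((hv k hk' (M k) (hMpos k hk')).trans (hterm k hk'))
      _ = ε / 2 + ε / (2 * G) * G := by rw [← Finset.mul_sum, ← hG]
      _ = ε := by field_simp; ring
  · -- cost
    have hcost_term : ∀ k ∈ range (K + 1),
        (M k : ℝ) * (CA * (η (k : ℤ) ^ (-s) + η ((k : ℤ) - 1) ^ (-s))) ≤
          CA * (2 * CI) ^ (1 / μ) * G ^ (1 / μ) * ε ^ (-(1 / μ)) *
            (F k ^ (μ / (μ + 1)) * η ((k : ℤ) - 1)) +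
          CA * (F k * η ((k : ℤ) - 1)) := by
      intro k hk
      have hk' : k ≤ K := Finset.mem_range_succ_iff.mp hk
      have hF' := hFpos k hk'
      have hη1 := hηk1 k hk'
      have hηs : η (k : ℤ) ^ (-s) + η ((k : ℤ) - 1) ^ (-s) = F k * η ((k : ℤ) - 1) := by
        rw [hF k]; field_simp
      have hxF : x k * (F k * η ((k : ℤ) - 1)) =
          (2 * CI) ^ (1 / μ) * G ^ (1 / μ) * ε ^ (-(1 / μ)) *
            (F k ^ (μ / (μ + 1)) * η ((k : ℤ) - 1)) := by
        rw [hx]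
        have h2 : (2 * CI * G) ^ (1 / μ) = (2 * CI) ^ (1 / μ) * G ^ (1 / μ) :=
          Real.mul_rpow (by positivity) hGpos.le
        have h3 : F k ^ (-(1 / (μ + 1))) * F k = F k ^ (μ / (μ + 1)) := by
          nth_rewrite 2 [← Real.rpow_one (F k)]
          rw [← Real.rpow_add hF']
          congr 1
          field_simp
          ring
        rw [h2]
        calc (2 * CI) ^ (1 / μ) * G ^ (1 / μ) * F k ^ (-(1 / (μ + 1))) * ε ^ (-(1 / μ)) *
              (F k * η ((k : ℤ) - 1))
            = (2 * CI) ^ (1 / μ) * G ^ (1 / μ) * ε ^ (-(1 / μ)) *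
              ((F k ^ (-(1 / (μ + 1))) * F k) * η ((k : ℤ) - 1)) := by ring
          _ = _ := by rw [h3]
      calc (M k : ℝ) * (CA * (η (k : ℤ) ^ (-s) + η ((k : ℤ) - 1) ^ (-s)))
          ≤ (x k + 1) * (CA * (η (k : ℤ) ^ (-s) + η ((k : ℤ) - 1) ^ (-s))) := by
            have hpos : 0 < η (k : ℤ) ^ (-s) + η ((k : ℤ) - 1) ^ (-s) := by
              have := hηk k hk'
              positivity
            gcongr
            exact hMle k hk'
        _ = CA * (x k * (F k * η ((k : ℤ) - 1))) + CA * (F k * η ((k : ℤ) - 1)) := by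
            rw [hηs]; ring
        _ = CA * (2 * CI) ^ (1 / μ) * G ^ (1 / μ) * ε ^ (-(1 / μ)) *
              (F k ^ (μ / (μ + 1)) * η ((k : ℤ) - 1)) +
            CA * (F k * η ((k : ℤ) - 1)) := by rw [hxF]; ring
    calc ∑ k ∈ range (K + 1),
          (M k : ℝ) * (CA * (η (k : ℤ) ^ (-s) + η ((k : ℤ) - 1) ^ (-s)))
        ≤ ∑ k ∈ range (K + 1),
          (CA * (2 * CI) ^ (1 / μ) * G ^ (1 / μ) * ε ^ (-(1 / μ)) *
            (F k ^ (μ / (μ + 1)) * η ((k : ℤ) - 1)) +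
          CA * (F k * η ((k : ℤ) - 1))) := Finset.sum_le_sum hcost_term
      _ = CA * (2 * CI) ^ (1 / μ) * G ^ (1 / μ) * ε ^ (-(1 / μ)) * G +
          CA * ∑ k ∈ range (K + 1), F k * η ((k : ℤ) - 1) := by
          rw [Finset.sum_add_distrib, ← Finset.mul_sum, ← Finset.mul_sum, ← hG]
      _ = CA * (2 * CI) ^ (1 / μ) * G ^ ((μ + 1) / μ) * ε ^ (-(1 / μ)) +
          CA * ∑ k ∈ range (K + 1), F k * η ((k : ℤ) - 1) := by
          have : G ^ ((μ + 1) / μ) = G ^ (1 / μ) * G := by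
            nth_rewrite 3 [← Real.rpow_one G]
            rw [← Real.rpow_add hGpos]
            congr 1
            field_simp
            ring
          rw [this]; ring
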